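/- Let S, Q be symmetric n×n real matrices and suppose Q has at most 2m nonzero eigenvalues (i.e., λ_{2m+1}(Q) = 0 in the ordered spectrum), where m is an integer with 1 ≤ m ≤ n/6 − 1. Then for every positive integer p: ‖S+Q‖^{2p} − 7m·‖S‖^{2p} ≤ tr((S+Q)^{2p}) − tr(S^{2p}) ≤ 4m·‖S+Q‖^{2p}, where ‖·‖ denotes the operator (spectral) norm. -/

import Mathlib

open Matrix Finset RealInnerProductSpace

section Helpers

lemma trace_pow_eq {n : ℕ} (A : Matrix (Fin n) (Fin n) ℝ) (hA : A.IsHermitian) (k : ℕ) :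
    Matrix.trace (A ^ k) = ∑ i, (hA.eigenvalues i) ^ k := by
  classical
  set U : Matrix (Fin n) (Fin n) ℝ := (hA.eigenvectorUnitary : Matrix (Fin n) (Fin n) ℝ) with hUdef
  have hU1 : star U * U = 1 := (Matrix.mem_unitaryGroup_iff').mp hA.eigenvectorUnitary.2
  have hU2 : U * star U = 1 := (Matrix.mem_unitaryGroup_iff).mp hA.eigenvectorUnitary.2
  have hspec : A = U * Matrix.diagonal hA.eigenvalues * star U := by
    have h := hA.spectral_theorem
    have h2 : (RCLike.ofReal ∘ hA.eigenvalues : Fin n → ℝ) = hA.eigenvalues := by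
      funext i; simp [RCLike.ofReal]
    rwa [h2] at h
  have hpow : A ^ k = U * (Matrix.diagonal hA.eigenvalues) ^ k * star U := by
    induction k with
    | zero => simpa [pow_zero] using hU2.symm
    | succ k ih =>
      calc A ^ (k+1) = A ^ k * A := pow_succ A k
        _ = U * diagonal hA.eigenvalues ^ k * star U *
              (U * Matrix.diagonal hA.eigenvalues * star U) := by rw [ih, ← hspec]
        _ = U * diagonal hA.eigenvalues ^ k * (star U * U) *
              Matrix.diagonal hA.eigenvalues * star U := by
            simp only [Matrix.mul_assoc]
        _ = U * diagonal hA.eigenvalues ^ (k+1) * star U := by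
            rw [hU1, Matrix.mul_one, pow_succ]
            simp only [Matrix.mul_assoc]
  rw [hpow, Matrix.trace_mul_cycle, hU1, Matrix.one_mul,
    Matrix.diagonal_pow, Matrix.trace_diagonal]
  rfl

variable {n : ℕ} {M : Matrix (Fin n) (Fin n) ℝ} (hM : M.IsHermitian)

lemma toEuc_eigen (i : Fin n) :
    Matrix.toEuclideanLin M (hM.eigenvectorBasis i) = hM.eigenvalues i • hM.eigenvectorBasis i := by
  apply (WithLp.equiv 2 (Fin n → ℝ)).injective
  simp only [WithLp.equiv_apply, Matrix.ofLp_toEuclideanLin_apply, WithLp.ofLp_smul]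
  exact hM.mulVec_eigenvectorBasis i

lemma repr_toEuc (x : EuclideanSpace ℝ (Fin n)) (i : Fin n) :
    hM.eigenvectorBasis.repr (Matrix.toEuclideanLin M x) i
      = hM.eigenvalues i * hM.eigenvectorBasis.repr x i := by
  have hsym : (Matrix.toEuclideanLin M).IsSymmetric :=
    (Matrix.isHermitian_iff_isSymmetric).mp hM
  rw [OrthonormalBasis.repr_apply_apply, OrthonormalBasis.repr_apply_apply,
    ← hsym (hM.eigenvectorBasis i) x, toEuc_eigen hM i, inner_smul_left]
  simp

lemma quad_formula (x : EuclideanSpace ℝ (Fin n)) :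
    ⟪x, Matrix.toEuclideanLin M x⟫
      = ∑ i, hM.eigenvalues i * (hM.eigenvectorBasis.repr x i)^2 := by
  rw [← hM.eigenvectorBasis.repr.inner_map_map x (Matrix.toEuclideanLin M x)]
  rw [PiLp.inner_apply]
  refine Finset.sum_congr rfl fun i _ => ?_
  rw [repr_toEuc hM x i]
  simp [RCLike.inner_apply, conj_trivial]
  ring

lemma norm_formula (x : EuclideanSpace ℝ (Fin n)) :
    ‖x‖^2 = ∑ i, (hM.eigenvectorBasis.repr x i)^2 := by
  rw [← real_inner_self_eq_norm_sq,
    ← hM.eigenvectorBasis.repr.inner_map_map x x, PiLp.inner_apply]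
  refine Finset.sum_congr rfl fun i _ => ?_
  simp [RCLike.inner_apply, conj_trivial]

noncomputable def Vsp (hM : M.IsHermitian) (T : Finset (Fin n)) :
    Submodule ℝ (EuclideanSpace ℝ (Fin n)) :=
  Submodule.span ℝ (⇑hM.eigenvectorBasis '' ↑T)

lemma finrank_Vsp (T : Finset (Fin n)) :
    T.card ≤ Module.finrank ℝ (Vsp hM T) := by
  classical
  have li : LinearIndependent ℝ
      (⇑hM.eigenvectorBasis ∘ (Subtype.val : ↥(↑T : Set (Fin n)) → Fin n)) :=
    (hM.eigenvectorBasis.orthonormal.linearIndependent).comp _ Subtype.val_injective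
  have h := finrank_span_eq_card li
  rw [Set.range_comp, Subtype.range_val] at h
  rw [Vsp, h]
  simp

lemma repr_eq_zero_of_mem_Vsp {T : Finset (Fin n)} {x : EuclideanSpace ℝ (Fin n)}
    (hx : x ∈ Vsp hM T) (i : Fin n) (hi : i ∉ T) : hM.eigenvectorBasis.repr x i = 0 := by
  induction hx using Submodule.span_induction with
  | mem y hy =>
    obtain ⟨j, hj, rfl⟩ := hy
    rw [OrthonormalBasis.repr_self]
    have hne : j ≠ i := fun h => hi (h ▸ hj)
    simp [EuclideanSpace.single_apply, hne.symm]
  | zero => simp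
  | add y z _ _ hy hz => simp [hy, hz]
  | smul c y _ hy => simp [hy]

lemma quad_le_of_mem (T : Finset (Fin n)) (t : ℝ)
    (hev : ∀ i ∈ T, hM.eigenvalues i ≤ t) {x : EuclideanSpace ℝ (Fin n)}
    (hx : x ∈ Vsp hM T) : ⟪x, Matrix.toEuclideanLin M x⟫ ≤ t * ‖x‖^2 := by
  rw [quad_formula hM, norm_formula hM, Finset.mul_sum]
  apply Finset.sum_le_sum; intro i _
  by_cases hi : i ∈ T
  · have := hev i hi; nlinarith [sq_nonneg (hM.eigenvectorBasis.repr x i)]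
  · rw [repr_eq_zero_of_mem_Vsp hM hx i hi]; simp

lemma quad_ge_of_mem (T : Finset (Fin n)) (t : ℝ)
    (hev : ∀ i ∈ T, t ≤ hM.eigenvalues i) {x : EuclideanSpace ℝ (Fin n)}
    (hx : x ∈ Vsp hM T) : t * ‖x‖^2 ≤ ⟪x, Matrix.toEuclideanLin M x⟫ := by
  rw [quad_formula hM, norm_formula hM, Finset.mul_sum]
  apply Finset.sum_le_sum; intro i _
  by_cases hi : i ∈ T
  · have := hev i hi; nlinarith [sq_nonneg (hM.eigenvectorBasis.repr x i)]
  · rw [repr_eq_zero_of_mem_Vsp hM hx i hi]; simp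

end Helpers

section Counting

variable {n : ℕ}

lemma count_lemma (S Q : Matrix (Fin n) (Fin n) ℝ) (hS : S.IsHermitian)
    (hQ : Q.IsHermitian) (t : ℝ) :
    (univ.filter fun i => t < (hS.add hQ).eigenvalues i).card
      ≤ (univ.filter fun i => t < hS.eigenvalues i).card
        + (univ.filter fun i => 0 < hQ.eigenvalues i).card := by
  classical
  by_contra hcon
  push_neg at hcon
  set hA := hS.add hQ with hAdef
  set TA := univ.filter fun i => t < hA.eigenvalues i with hTA
  set TS := univ.filter fun i => ¬ t < hS.eigenvalues i with hTS
  set TQ := univ.filter fun i => ¬ 0 < hQ.eigenvalues i with hTQ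
  have hcardS : TS.card + (univ.filter fun i => t < hS.eigenvalues i).card = n := by
    rw [hTS, add_comm]
    simpa using Finset.card_filter_add_card_filter_not
      (s := (univ : Finset (Fin n))) (p := fun i => t < hS.eigenvalues i)
  have hcardQ : TQ.card + (univ.filter fun i => 0 < hQ.eigenvalues i).card = n := by
    rw [hTQ, add_comm]
    simpa using Finset.card_filter_add_card_filter_not
      (s := (univ : Finset (Fin n))) (p := fun i => 0 < hQ.eigenvalues i)
  let V := Vsp hA TA
  let W := Vsp hS TS
  let U := Vsp hQ TQ
  have hdV : TA.card ≤ Module.finrank ℝ ↥V := finrank_Vsp hA TA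
  have hdW : TS.card ≤ Module.finrank ℝ ↥W := finrank_Vsp hS TS
  have hdU : TQ.card ≤ Module.finrank ℝ ↥U := finrank_Vsp hQ TQ
  have h1 : Module.finrank ℝ ↥(V ⊔ W) + Module.finrank ℝ ↥(V ⊓ W)
      = Module.finrank ℝ ↥V + Module.finrank ℝ ↥W :=
    Submodule.finrank_sup_add_finrank_inf_eq V W
  have h2 : Module.finrank ℝ ↥((V ⊓ W) ⊔ U) + Module.finrank ℝ ↥(V ⊓ W ⊓ U)
      = Module.finrank ℝ ↥(V ⊓ W) + Module.finrank ℝ ↥U :=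
    Submodule.finrank_sup_add_finrank_inf_eq (V ⊓ W) U
  have hn1 : Module.finrank ℝ ↥(V ⊔ W) ≤ n := by
    simpa [finrank_euclideanSpace_fin] using (V ⊔ W).finrank_le
  have hn2 : Module.finrank ℝ ↥((V ⊓ W) ⊔ U) ≤ n := by
    simpa [finrank_euclideanSpace_fin] using ((V ⊓ W) ⊔ U).finrank_le
  have hpos : 0 < Module.finrank ℝ ↥(V ⊓ W ⊓ U) := by omega
  have hne : V ⊓ W ⊓ U ≠ ⊥ := by
    intro hbot
    rw [hbot, finrank_bot] at hpos
    exact lt_irrefl 0 hpos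
  obtain ⟨x, hxmem, hxne⟩ := Submodule.exists_mem_ne_zero_of_ne_bot hne
  have hxV : x ∈ V := hxmem.1.1
  have hxW : x ∈ W := hxmem.1.2
  have hxU : x ∈ U := hxmem.2
  have hxnorm : 0 < ‖x‖^2 := by
    have h0 : 0 < ‖x‖ := norm_pos_iff.mpr hxne
    positivity
  have hTAne : TA.Nonempty := by
    rw [← Finset.card_pos]; omega
  set t' := ((TA.image hA.eigenvalues).min' (hTAne.image _)) with ht'
  obtain ⟨i0, hi0T, hi0⟩ := Finset.mem_image.mp
    ((TA.image hA.eigenvalues).min'_mem (hTAne.image _))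
  have ht'gt : t < t' := by
    rw [ht', ← hi0]
    exact (Finset.mem_filter.mp hi0T).2
  have hget : ∀ i ∈ TA, t' ≤ hA.eigenvalues i := fun i hi =>
    Finset.min'_le _ _ (Finset.mem_image_of_mem _ hi)
  have hA_ge : t' * ‖x‖^2 ≤ ⟪x, Matrix.toEuclideanLin (S + Q) x⟫ :=
    quad_ge_of_mem hA TA t' hget hxV
  have hS_le : ⟪x, Matrix.toEuclideanLin S x⟫ ≤ t * ‖x‖^2 :=
    quad_le_of_mem hS TS t (fun i hi => le_of_not_gt (Finset.mem_filter.mp hi).2) hxW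
  have hQ_le : ⟪x, Matrix.toEuclideanLin Q x⟫ ≤ 0 * ‖x‖^2 :=
    quad_le_of_mem hQ TQ 0 (fun i hi => le_of_not_gt (Finset.mem_filter.mp hi).2) hxU
  have hsplit : ⟪x, Matrix.toEuclideanLin (S + Q) x⟫
      = ⟪x, Matrix.toEuclideanLin S x⟫ + ⟪x, Matrix.toEuclideanLin Q x⟫ := by
    rw [map_add]
    simp [inner_add_right]
  nlinarith

lemma count_lemma2 (S Q : Matrix (Fin n) (Fin n) ℝ) (hS : S.IsHermitian)
    (hQ : Q.IsHermitian) (t : ℝ) :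
    (univ.filter fun i => (hS.add hQ).eigenvalues i < t).card
      ≤ (univ.filter fun i => hS.eigenvalues i < t).card
        + (univ.filter fun i => hQ.eigenvalues i < 0).card := by
  classical
  by_contra hcon
  push_neg at hcon
  set hA := hS.add hQ with hAdef
  set TA := univ.filter fun i => hA.eigenvalues i < t with hTA
  set TS := univ.filter fun i => ¬ hS.eigenvalues i < t with hTS
  set TQ := univ.filter fun i => ¬ hQ.eigenvalues i < 0 with hTQ
  have hcardS : TS.card + (univ.filter fun i => hS.eigenvalues i < t).card = n := by
    rw [hTS, add_comm]
    simpa using Finset.card_filter_add_card_filter_not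
      (s := (univ : Finset (Fin n))) (p := fun i => hS.eigenvalues i < t)
  have hcardQ : TQ.card + (univ.filter fun i => hQ.eigenvalues i < 0).card = n := by
    rw [hTQ, add_comm]
    simpa using Finset.card_filter_add_card_filter_not
      (s := (univ : Finset (Fin n))) (p := fun i => hQ.eigenvalues i < 0)
  let V := Vsp hA TA
  let W := Vsp hS TS
  let U := Vsp hQ TQ
  have hdV : TA.card ≤ Module.finrank ℝ ↥V := finrank_Vsp hA TA
  have hdW : TS.card ≤ Module.finrank ℝ ↥W := finrank_Vsp hS TS
  have hdU : TQ.card ≤ Module.finrank ℝ ↥U := finrank_Vsp hQ TQ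
  have h1 : Module.finrank ℝ ↥(V ⊔ W) + Module.finrank ℝ ↥(V ⊓ W)
      = Module.finrank ℝ ↥V + Module.finrank ℝ ↥W :=
    Submodule.finrank_sup_add_finrank_inf_eq V W
  have h2 : Module.finrank ℝ ↥((V ⊓ W) ⊔ U) + Module.finrank ℝ ↥(V ⊓ W ⊓ U)
      = Module.finrank ℝ ↥(V ⊓ W) + Module.finrank ℝ ↥U :=
    Submodule.finrank_sup_add_finrank_inf_eq (V ⊓ W) U
  have hn1 : Module.finrank ℝ ↥(V ⊔ W) ≤ n := by
    simpa [finrank_euclideanSpace_fin] using (V ⊔ W).finrank_le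
  have hn2 : Module.finrank ℝ ↥((V ⊓ W) ⊔ U) ≤ n := by
    simpa [finrank_euclideanSpace_fin] using ((V ⊓ W) ⊔ U).finrank_le
  have hpos : 0 < Module.finrank ℝ ↥(V ⊓ W ⊓ U) := by omega
  have hne : V ⊓ W ⊓ U ≠ ⊥ := by
    intro hbot
    rw [hbot, finrank_bot] at hpos
    exact lt_irrefl 0 hpos
  obtain ⟨x, hxmem, hxne⟩ := Submodule.exists_mem_ne_zero_of_ne_bot hne
  have hxV : x ∈ V := hxmem.1.1
  have hxW : x ∈ W := hxmem.1.2
  have hxU : x ∈ U := hxmem.2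
  have hxnorm : 0 < ‖x‖^2 := by
    have h0 : 0 < ‖x‖ := norm_pos_iff.mpr hxne
    positivity
  have hTAne : TA.Nonempty := by
    rw [← Finset.card_pos]; omega
  set t' := ((TA.image hA.eigenvalues).max' (hTAne.image _)) with ht'
  obtain ⟨i0, hi0T, hi0⟩ := Finset.mem_image.mp
    ((TA.image hA.eigenvalues).max'_mem (hTAne.image _))
  have ht'lt : t' < t := by
    rw [ht', ← hi0]
    exact (Finset.mem_filter.mp hi0T).2
  have hget : ∀ i ∈ TA, hA.eigenvalues i ≤ t' := fun i hi =>
    Finset.le_max' _ _ (Finset.mem_image_of_mem _ hi)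
  have hA_le : ⟪x, Matrix.toEuclideanLin (S + Q) x⟫ ≤ t' * ‖x‖^2 :=
    quad_le_of_mem hA TA t' hget hxV
  have hS_ge : t * ‖x‖^2 ≤ ⟪x, Matrix.toEuclideanLin S x⟫ :=
    quad_ge_of_mem hS TS t (fun i hi => le_of_not_gt (Finset.mem_filter.mp hi).2) hxW
  have hQ_ge : 0 * ‖x‖^2 ≤ ⟪x, Matrix.toEuclideanLin Q x⟫ :=
    quad_ge_of_mem hQ TQ 0 (fun i hi => le_of_not_gt (Finset.mem_filter.mp hi).2) hxU
  have hsplit : ⟪x, Matrix.toEuclideanLin (S + Q) x⟫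
      = ⟪x, Matrix.toEuclideanLin S x⟫ + ⟪x, Matrix.toEuclideanLin Q x⟫ := by
    rw [map_add]
    simp [inner_add_right]
  nlinarith

end Counting

section SumLemmas

lemma card_filter_comp_equiv {α : Type*} [Fintype α] [DecidableEq α]
    (e : Equiv.Perm α) (P : α → Prop) [DecidablePred P] :
    (univ.filter fun a => P (e a)).card = (univ.filter P).card := by
  apply Finset.card_bij (fun a _ => e a)
  · intro a ha; simp only [mem_filter, mem_univ, true_and] at ha ⊢; exact ha
  · intro a _ b _ hab; exact e.injective hab
  · intro b hb
    refine ⟨e.symm b, ?_, by simp⟩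
    simp only [mem_filter, mem_univ, true_and] at hb ⊢
    simpa using hb

lemma card_filter_le_val (n j : ℕ) :
    ((univ : Finset (Fin n)).filter fun (i : Fin n) => j ≤ (i : ℕ)).card = n - j := by
  rw [show n - j = (Finset.Ico j n).card by rw [Nat.card_Ico]]
  apply Finset.card_bij (fun (i : Fin n) _ => (i : ℕ))
  · intro a ha; simp only [mem_filter, mem_univ, true_and] at ha
    exact Finset.mem_Ico.mpr ⟨ha, a.isLt⟩
  · intro a _ b _ hab; exact Fin.val_injective hab
  · intro b hb
    obtain ⟨h1, h2⟩ := Finset.mem_Ico.mp hb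
    exact ⟨⟨b, h2⟩, by simpa using h1, rfl⟩

lemma card_filter_lt_val (n j : ℕ) (hj : j ≤ n) :
    ((univ : Finset (Fin n)).filter fun (i : Fin n) => (i : ℕ) < j).card = j := by
  conv_rhs => rw [show j = (Finset.range j).card by rw [Finset.card_range]]
  apply Finset.card_bij (fun (i : Fin n) _ => (i : ℕ))
  · intro a ha; simp only [mem_filter, mem_univ, true_and] at ha
    exact Finset.mem_range.mpr ha
  · intro a _ b _ hab; exact Fin.val_injective hab
  · intro b hb
    have hb' := Finset.mem_range.mp hb
    exact ⟨⟨b, lt_of_lt_of_le hb' hj⟩, by simpa using hb', rfl⟩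

lemma core_sum (x y : ℕ → ℝ) (B : ℝ) (hB : 0 ≤ B) (N k : ℕ)
    (hx : ∀ j, j < N → x j ≤ B) (h : ∀ j, j + k < N → x j ≤ y j) :
    ∑ j ∈ range N, x j ≤ k * B + ∑ j ∈ range (N - k), y j := by
  rcases le_or_gt k N with hk | hk
  · have hsplit : (∑ j ∈ Finset.Ico 0 (N - k), x j) + ∑ j ∈ Finset.Ico (N - k) N, x j
        = ∑ j ∈ Finset.Ico 0 N, x j :=
      Finset.sum_Ico_consecutive _ (Nat.zero_le _) (Nat.sub_le _ _)
    rw [Finset.range_eq_Ico, ← hsplit]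
    have h1 : ∑ j ∈ Finset.Ico 0 (N - k), x j ≤ ∑ j ∈ Finset.Ico 0 (N - k), y j :=
      Finset.sum_le_sum fun j hj => h j (by
        have := (Finset.mem_Ico.mp hj).2; omega)
    have h2 : ∑ j ∈ Finset.Ico (N - k) N, x j ≤ k * B := by
      calc ∑ j ∈ Finset.Ico (N - k) N, x j ≤ (Finset.Ico (N - k) N).card • B :=
            Finset.sum_le_card_nsmul _ _ _ fun j hj => hx j (Finset.mem_Ico.mp hj).2
        _ = (k : ℝ) * B := by
              rw [Nat.card_Ico, show N - (N - k) = k from by omega, nsmul_eq_mul]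
    rw [Finset.range_eq_Ico]
    linarith
  · have h1 : ∑ j ∈ range N, x j ≤ (N : ℝ) * B := by
      have := Finset.sum_le_card_nsmul (range N) x B fun j hj => hx j (Finset.mem_range.mp hj)
      rwa [Finset.card_range, nsmul_eq_mul] at this
    have h2 : (N : ℝ) * B ≤ k * B :=
      mul_le_mul_of_nonneg_right (by exact_mod_cast hk.le) hB
    have h3 : N - k = 0 := by omega
    rw [h3]
    simpa using h1.trans h2

lemma core_sum' (x y : ℕ → ℝ) (B : ℝ) (hB : 0 ≤ B) (N k : ℕ)
    (hx : ∀ j, j < N → x j ≤ B) (h : ∀ j, k ≤ j → j < N → x j ≤ y j) :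
    ∑ j ∈ range N, x j ≤ k * B + ∑ j ∈ Finset.Ico k N, y j := by
  rcases le_or_gt k N with hk | hk
  · have hsplit : (∑ j ∈ Finset.Ico 0 k, x j) + ∑ j ∈ Finset.Ico k N, x j
        = ∑ j ∈ Finset.Ico 0 N, x j :=
      Finset.sum_Ico_consecutive _ (Nat.zero_le _) hk
    rw [Finset.range_eq_Ico, ← hsplit]
    have h1 : ∑ j ∈ Finset.Ico 0 k, x j ≤ k * B := by
      calc ∑ j ∈ Finset.Ico 0 k, x j ≤ (Finset.Ico 0 k).card • B :=
            Finset.sum_le_card_nsmul _ _ _ fun j hj =>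
              hx j (lt_of_lt_of_le (Finset.mem_Ico.mp hj).2 hk)
        _ = (k : ℝ) * B := by
              rw [Nat.card_Ico, Nat.sub_zero, nsmul_eq_mul]
    have h2 : ∑ j ∈ Finset.Ico k N, x j ≤ ∑ j ∈ Finset.Ico k N, y j :=
      Finset.sum_le_sum fun j hj => h j (Finset.mem_Ico.mp hj).1 (Finset.mem_Ico.mp hj).2
    linarith
  · have hico : Finset.Ico k N = ∅ := Finset.Ico_eq_empty (by omega)
    have h1 : ∑ j ∈ range N, x j ≤ (N : ℝ) * B := by
      have := Finset.sum_le_card_nsmul (range N) x B fun j hj => hx j (Finset.mem_range.mp hj)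
      rwa [Finset.card_range, nsmul_eq_mul] at this
    rw [hico]
    have h2 : (N : ℝ) * B ≤ k * B :=
      mul_le_mul_of_nonneg_right (by exact_mod_cast hk.le) hB
    simpa using h1.trans h2

end SumLemmas

/-- Trace difference bounds for a low-rank symmetric perturbation (Lemma 7 of the
companion paper): if `Q` has at most `2m` nonzero eigenvalues and `1 ≤ m ≤ n/6 - 1`,
then for every `p ≥ 1`,
`‖S+Q‖^{2p} − 7m‖S‖^{2p} ≤ tr((S+Q)^{2p}) − tr(S^{2p}) ≤ 4m‖S+Q‖^{2p}`,
where the spectral norm of a symmetric matrix is the largest absolute eigenvalue. -/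
theorem stmt4 {n : ℕ} (m p : ℕ) (S Q : Matrix (Fin n) (Fin n) ℝ)
    (hS : S.IsHermitian) (hQ : Q.IsHermitian)
    (hm1 : 1 ≤ m) (hm2 : (m : ℝ) ≤ (n : ℝ) / 6 - 1)
    (hrank : (Finset.univ.filter (fun i => hQ.eigenvalues i ≠ 0)).card ≤ 2 * m)
    (hp : 1 ≤ p) :
    (⨆ i, |(hS.add hQ).eigenvalues i|) ^ (2 * p)
        - 7 * (m : ℝ) * (⨆ i, |hS.eigenvalues i|) ^ (2 * p)
      ≤ Matrix.trace ((S + Q) ^ (2 * p)) - Matrix.trace (S ^ (2 * p)) ∧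
    Matrix.trace ((S + Q) ^ (2 * p)) - Matrix.trace (S ^ (2 * p))
      ≤ 4 * (m : ℝ) * (⨆ i, |(hS.add hQ).eigenvalues i|) ^ (2 * p) := by
  classical
  -- n is large
  have hn : 12 ≤ n := by
    have h1 : (1 : ℝ) ≤ (m : ℝ) := by exact_mod_cast hm1
    have h2 : (12 : ℝ) ≤ (n : ℝ) := by nlinarith
    exact_mod_cast h2
  have hn0 : 0 < n := by omega
  set evA := (hS.add hQ).eigenvalues with hevA
  set evS := hS.eigenvalues with hevS
  set evQ := hQ.eigenvalues with hevQ
  set σA := Tuple.sort evA with hσA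
  set σS := Tuple.sort evS with hσS
  set aN : ℕ → ℝ := fun j => if h : j < n then evA (σA ⟨j, h⟩) else 0 with haN
  set sN : ℕ → ℝ := fun j => if h : j < n then evS (σS ⟨j, h⟩) else 0 with hsN
  have aN_eq : ∀ i : Fin n, aN (i : ℕ) = evA (σA i) := fun i => by
    simp [haN, i.isLt]
  have sN_eq : ∀ i : Fin n, sN (i : ℕ) = evS (σS i) := fun i => by
    simp [hsN, i.isLt]
  have aN_mono : ∀ j k, j ≤ k → k < n → aN j ≤ aN k := by
    intro j k hjk hk
    have h1 : j < n := lt_of_le_of_lt hjk hk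
    simp only [haN, dif_pos h1, dif_pos hk]
    exact Tuple.monotone_sort evA (show (⟨j, h1⟩ : Fin n) ≤ ⟨k, hk⟩ from hjk)
  have sN_mono : ∀ j k, j ≤ k → k < n → sN j ≤ sN k := by
    intro j k hjk hk
    have h1 : j < n := lt_of_le_of_lt hjk hk
    simp only [hsN, dif_pos h1, dif_pos hk]
    exact Tuple.monotone_sort evS (show (⟨j, h1⟩ : Fin n) ≤ ⟨k, hk⟩ from hjk)
  -- norms
  set α := ⨆ i, |evA i| with hα
  set β := ⨆ i, |evS i| with hβ
  have bddA : BddAbove (Set.range fun i => |evA i|) := (Set.finite_range _).bddAbove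
  have bddS : BddAbove (Set.range fun i => |evS i|) := (Set.finite_range _).bddAbove
  have habsA : ∀ i, |evA i| ≤ α := fun i => le_ciSup bddA i
  have habsS : ∀ i, |evS i| ≤ β := fun i => le_ciSup bddS i
  have hα0 : 0 ≤ α := le_trans (abs_nonneg _) (habsA ⟨0, hn0⟩)
  have hβ0 : 0 ≤ β := le_trans (abs_nonneg _) (habsS ⟨0, hn0⟩)
  have haNle : ∀ j, j < n → |aN j| ≤ α := by
    intro j hj; rw [haN]; simp only [dif_pos hj]; exact habsA _
  have hsNle : ∀ j, j < n → |sN j| ≤ β := by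
    intro j hj; rw [hsN]; simp only [dif_pos hj]; exact habsS _
  -- signs of Q eigenvalues
  set π := (univ.filter fun i => 0 < evQ i).card with hπ
  set ν := (univ.filter fun i => evQ i < 0).card with hν
  have hπν : π + ν ≤ 2 * m := by
    have hdisj : Disjoint (univ.filter fun i => 0 < evQ i)
        (univ.filter fun i => evQ i < 0) := by
      rw [Finset.disjoint_filter]
      intro i _ h1 h2
      exact absurd h1 (not_lt.mpr h2.le)
    have hunion : (univ.filter fun i => 0 < evQ i) ∪ (univ.filter fun i => evQ i < 0)
        = univ.filter fun i => evQ i ≠ 0 := by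
      ext i
      simp only [Finset.mem_union, Finset.mem_filter, Finset.mem_univ, true_and]
      constructor
      · rintro (h | h)
        · exact ne_of_gt h
        · exact ne_of_lt h
      · intro h
        rcases lt_or_gt_of_ne h with h | h
        · exact Or.inr h
        · exact Or.inl h
    calc π + ν = ((univ.filter fun i => 0 < evQ i) ∪ (univ.filter fun i => evQ i < 0)).card := by
          rw [Finset.card_union_of_disjoint hdisj]
      _ = (univ.filter fun i => evQ i ≠ 0).card := by rw [hunion]
      _ ≤ 2 * m := hrank
  -- interlacing I1
  have I1 : ∀ j, j + π < n → aN j ≤ sN (j + π) := by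
    intro j hj
    by_contra hcon
    push_neg at hcon
    set t := sN (j + π) with ht
    have hNA : n - j ≤ (univ.filter fun i => t < evA i).card := by
      rw [← card_filter_comp_equiv σA (fun i => t < evA i)]
      rw [← card_filter_le_val n j]
      apply Finset.card_le_card
      intro i hi
      simp only [Finset.mem_filter, Finset.mem_univ, true_and] at hi ⊢
      have h1 : aN j ≤ aN (i : ℕ) := aN_mono j i hi i.isLt
      rw [aN_eq i] at h1
      linarith
    have hNS : (univ.filter fun i => t < evS i).card ≤ n - (j + π + 1) := by
      rw [← card_filter_comp_equiv σS (fun i => t < evS i)]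
      rw [← card_filter_le_val n (j + π + 1)]
      apply Finset.card_le_card
      intro i hi
      simp only [Finset.mem_filter, Finset.mem_univ, true_and] at hi ⊢
      by_contra hlt
      push_neg at hlt
      have h1 : sN (i : ℕ) ≤ sN (j + π) := sN_mono i (j + π) (by omega) hj
      rw [sN_eq i] at h1
      rw [ht] at hi
      linarith
    have hcount := count_lemma S Q hS hQ t
    rw [← hevA, ← hevS, ← hevQ, ← hπ] at hcount
    omega
  -- interlacing I2
  have I2 : ∀ j, j + ν < n → sN j ≤ aN (j + ν) := by
    intro j hj
    by_contra hcon
    push_neg at hcon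
    set t := sN j with ht
    have hNA : j + ν + 1 ≤ (univ.filter fun i => evA i < t).card := by
      rw [← card_filter_comp_equiv σA (fun i => evA i < t)]
      rw [← card_filter_lt_val n (j + ν + 1) (by omega)]
      apply Finset.card_le_card
      intro i hi
      simp only [Finset.mem_filter, Finset.mem_univ, true_and] at hi ⊢
      have h1 : aN (i : ℕ) ≤ aN (j + ν) := aN_mono i (j + ν) (by omega) hj
      rw [aN_eq i] at h1
      linarith
    have hNS : (univ.filter fun i => evS i < t).card ≤ j := by
      rw [← card_filter_comp_equiv σS (fun i => evS i < t)]
      rw [← card_filter_lt_val n j (by omega)]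
      apply Finset.card_le_card
      intro i hi
      simp only [Finset.mem_filter, Finset.mem_univ, true_and] at hi ⊢
      by_contra hlt
      push_neg at hlt
      have h1 : sN j ≤ sN (i : ℕ) := sN_mono j i hlt i.isLt
      rw [sN_eq i] at h1
      rw [ht] at hi
      linarith
    have hcount := count_lemma2 S Q hS hQ t
    rw [← hevA, ← hevS, ← hevQ, ← hν] at hcount
    omega
  -- trace as sorted sums
  have sumA : Matrix.trace ((S + Q) ^ (2 * p)) = ∑ j ∈ range n, (aN j) ^ (2 * p) := by
    rw [trace_pow_eq (S + Q) (hS.add hQ) (2 * p)]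
    rw [← Fin.sum_univ_eq_sum_range (fun j => (aN j) ^ (2 * p)) n]
    rw [← Equiv.sum_comp σA (fun i => (evA i) ^ (2 * p))]
    exact Finset.sum_congr rfl fun i _ => by rw [aN_eq i]
  have sumS : Matrix.trace (S ^ (2 * p)) = ∑ j ∈ range n, (sN j) ^ (2 * p) := by
    rw [trace_pow_eq S hS (2 * p)]
    rw [← Fin.sum_univ_eq_sum_range (fun j => (sN j) ^ (2 * p)) n]
    rw [← Equiv.sum_comp σS (fun i => (evS i) ^ (2 * p))]
    exact Finset.sum_congr rfl fun i _ => by rw [sN_eq i]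
  -- the two monotone pieces
  set g : ℝ → ℝ := fun x => (max x 0) ^ (2 * p) with hg
  set h : ℝ → ℝ := fun x => (max (-x) 0) ^ (2 * p) with hh
  have hp0 : 2 * p ≠ 0 := by omega
  have ghadd : ∀ x : ℝ, g x + h x = x ^ (2 * p) := by
    intro x
    rcases le_total 0 x with hx | hx
    · rw [hg, hh]
      simp only [max_eq_left hx, max_eq_right (neg_nonpos.mpr hx), zero_pow hp0, add_zero]
    · rw [hg, hh]
      simp only [max_eq_right hx, max_eq_left (neg_nonneg.mpr hx), zero_pow hp0, zero_add]
      exact Even.neg_pow (even_two_mul p) x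
  have gmono : ∀ x y : ℝ, x ≤ y → g x ≤ g y := by
    intro x y hxy
    exact pow_le_pow_left₀ (le_max_right x 0) (max_le_max hxy le_rfl) _
  have hanti : ∀ x y : ℝ, x ≤ y → h y ≤ h x := by
    intro x y hxy
    exact pow_le_pow_left₀ (le_max_right (-y) 0) (max_le_max (neg_le_neg hxy) le_rfl) _
  have gnn : ∀ x : ℝ, 0 ≤ g x := fun x => pow_nonneg (le_max_right x 0) _
  have hnn : ∀ x : ℝ, 0 ≤ h x := fun x => pow_nonneg (le_max_right (-x) 0) _
  have gle : ∀ (x B : ℝ), |x| ≤ B → g x ≤ B ^ (2 * p) := by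
    intro x B hxB
    exact pow_le_pow_left₀ (le_max_right x 0)
      (max_le ((le_abs_self x).trans hxB) ((abs_nonneg x).trans hxB)) _
  have hle : ∀ (x B : ℝ), |x| ≤ B → h x ≤ B ^ (2 * p) := by
    intro x B hxB
    refine pow_le_pow_left₀ (le_max_right (-x) 0) (max_le ?_ ((abs_nonneg x).trans hxB)) _
    calc -x ≤ |x| := neg_le_abs x
      _ ≤ B := hxB
  -- four sum bounds
  have SB1 : ∑ j ∈ range n, g (aN j) ≤ π * α ^ (2 * p) + ∑ j ∈ range n, g (sN j) := by
    have hcore := core_sum (fun j => g (aN j)) (fun j => g (sN (j + π))) (α ^ (2 * p))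
      (by positivity) n π
      (fun j hj => gle _ _ (haNle j hj))
      (fun j hj => gmono _ _ (I1 j hj))
    refine hcore.trans (add_le_add_right ?_ _)
    calc ∑ j ∈ range (n - π), g (sN (j + π)) = ∑ j ∈ Finset.Ico π n, g (sN j) := by
          rw [Finset.sum_Ico_eq_sum_range]
          exact Finset.sum_congr rfl fun j _ => by rw [add_comm]
      _ ≤ ∑ j ∈ range n, g (sN j) := by
          apply Finset.sum_le_sum_of_subset_of_nonneg
          · intro j hj
            rw [Finset.mem_range]
            exact (Finset.mem_Ico.mp hj).2
          · exact fun j _ _ => gnn _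
  have SB2 : ∑ j ∈ range n, h (aN j) ≤ ν * α ^ (2 * p) + ∑ j ∈ range n, h (sN j) := by
    have hcore := core_sum' (fun j => h (aN j)) (fun j => h (sN (j - ν))) (α ^ (2 * p))
      (by positivity) n ν
      (fun j hj => hle _ _ (haNle j hj))
      (fun j hj1 hj2 => hanti _ _ (by
        have := I2 (j - ν) (by omega)
        rwa [show j - ν + ν = j from by omega] at this))
    refine hcore.trans (add_le_add_right ?_ _)
    calc ∑ j ∈ Finset.Ico ν n, h (sN (j - ν)) = ∑ j ∈ range (n - ν), h (sN j) := by
          rw [Finset.sum_Ico_eq_sum_range]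
          exact Finset.sum_congr rfl fun j _ => by rw [show ν + j - ν = j from by omega]
      _ ≤ ∑ j ∈ range n, h (sN j) := by
          apply Finset.sum_le_sum_of_subset_of_nonneg
          · exact Finset.range_subset_range.mpr (by omega)
          · exact fun j _ _ => hnn _
  have SB3 : ∑ j ∈ range n, g (sN j)
      ≤ (ν + 1) * β ^ (2 * p) + (∑ j ∈ range n, g (aN j) - g (aN (n - 1))) := by
    have hcore := core_sum (fun j => g (sN j)) (fun j => g (aN (j + ν))) (β ^ (2 * p))
      (by positivity) n (ν + 1)
      (fun j hj => gle _ _ (hsNle j hj))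
      (fun j hj => gmono _ _ (I2 j (by omega)))
    refine hcore.trans ?_
    push_cast
    apply add_le_add_right
    calc ∑ j ∈ range (n - (ν + 1)), g (aN (j + ν)) = ∑ j ∈ Finset.Ico ν (n - 1), g (aN j) := by
          rw [Finset.sum_Ico_eq_sum_range,
            show n - 1 - ν = n - (ν + 1) from by omega]
          exact Finset.sum_congr rfl fun j _ => by rw [add_comm]
      _ ≤ ∑ j ∈ range (n - 1), g (aN j) := by
          apply Finset.sum_le_sum_of_subset_of_nonneg
          · intro j hj
            rw [Finset.mem_range]
            exact (Finset.mem_Ico.mp hj).2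
          · exact fun j _ _ => gnn _
      _ = ∑ j ∈ range n, g (aN j) - g (aN (n - 1)) := by
          have hs := Finset.sum_range_succ (fun j => g (aN j)) (n - 1)
          rw [show (n - 1) + 1 = n from by omega] at hs
          rw [hs]
          ring
  have SB4 : ∑ j ∈ range n, h (sN j)
      ≤ (π + 1) * β ^ (2 * p) + (∑ j ∈ range n, h (aN j) - h (aN 0)) := by
    have hcore := core_sum' (fun j => h (sN j)) (fun j => h (aN (j - π))) (β ^ (2 * p))
      (by positivity) n (π + 1)
      (fun j hj => hle _ _ (hsNle j hj))
      (fun j hj1 hj2 => hanti _ _ (by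
        have := I1 (j - π) (by omega)
        rwa [show j - π + π = j from by omega] at this))
    refine hcore.trans ?_
    push_cast
    apply add_le_add_right
    calc ∑ j ∈ Finset.Ico (π + 1) n, h (aN (j - π)) = ∑ j ∈ Finset.Ico 1 (n - π), h (aN j) := by
          rw [Finset.sum_Ico_eq_sum_range, Finset.sum_Ico_eq_sum_range,
            show n - (π + 1) = n - π - 1 from by omega]
          exact Finset.sum_congr rfl fun j _ => by
            rw [show π + 1 + j - π = 1 + j from by omega]
      _ ≤ ∑ j ∈ Finset.Ico 1 n, h (aN j) := by
          apply Finset.sum_le_sum_of_subset_of_nonneg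
          · exact Finset.Ico_subset_Ico le_rfl (by omega)
          · exact fun j _ _ => hnn _
      _ = ∑ j ∈ range n, h (aN j) - h (aN 0) := by
          rw [Finset.range_eq_Ico, Finset.sum_eq_sum_Ico_succ_bot hn0]
          ring
  -- α^{2p} is dominated by extreme sorted entries
  have αle : α ^ (2 * p) ≤ g (aN (n - 1)) + h (aN 0) := by
    haveI : Nonempty (Fin n) := ⟨⟨0, hn0⟩⟩
    obtain ⟨i0, hi0⟩ := Finite.exists_max fun i : Fin n => |evA i|
    have hαeq : α = |evA i0| := le_antisymm (ciSup_le hi0) (habsA i0)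
    set j0 := σA.symm i0 with hj0
    have haj0 : aN (j0 : ℕ) = evA i0 := by
      rw [aN_eq j0, hj0, Equiv.apply_symm_apply]
    have h1 : α ^ (2 * p) = (aN (j0 : ℕ)) ^ (2 * p) := by
      rw [hαeq, haj0, Even.pow_abs (even_two_mul p)]
    rw [h1, ← ghadd (aN (j0 : ℕ))]
    have h2 : g (aN (j0 : ℕ)) ≤ g (aN (n - 1)) :=
      gmono _ _ (aN_mono (j0 : ℕ) (n - 1) (by omega) (by omega))
    have h3 : h (aN (j0 : ℕ)) ≤ h (aN 0) :=
      hanti _ _ (aN_mono 0 (j0 : ℕ) (by omega) j0.isLt)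
    linarith
  -- assemble
  have splitA : ∑ j ∈ range n, (aN j) ^ (2 * p)
      = ∑ j ∈ range n, g (aN j) + ∑ j ∈ range n, h (aN j) := by
    rw [← Finset.sum_add_distrib]
    exact Finset.sum_congr rfl fun j _ => (ghadd (aN j)).symm
  have splitS : ∑ j ∈ range n, (sN j) ^ (2 * p)
      = ∑ j ∈ range n, g (sN j) + ∑ j ∈ range n, h (sN j) := by
    rw [← Finset.sum_add_distrib]
    exact Finset.sum_congr rfl fun j _ => (ghadd (sN j)).symm
  have hπνR : (π : ℝ) + (ν : ℝ) ≤ 2 * m := by exact_mod_cast hπν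
  have hm1R : (1 : ℝ) ≤ (m : ℝ) := by exact_mod_cast hm1
  have hαp : 0 ≤ α ^ (2 * p) := by positivity
  have hβp : 0 ≤ β ^ (2 * p) := by positivity
  rw [sumA, sumS]
  have hmR0 : (0 : ℝ) ≤ (m : ℝ) := le_trans zero_le_one hm1R
  constructor
  · -- lower bound
    rw [splitA, splitS]
    have h2 := mul_le_mul_of_nonneg_right hπνR hβp
    have h3 : β ^ (2 * p) ≤ (m : ℝ) * β ^ (2 * p) := le_mul_of_one_le_left hβp hm1R
    have hmβ : 0 ≤ (m : ℝ) * β ^ (2 * p) := mul_nonneg hmR0 hβp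
    push_cast at SB3 SB4 ⊢
    linarith [SB3, SB4, αle]
  · -- upper bound
    rw [splitA, splitS]
    have h1 := mul_le_mul_of_nonneg_right hπνR hαp
    have hmα : 0 ≤ (m : ℝ) * α ^ (2 * p) := mul_nonneg hmR0 hαp
    push_cast at SB1 SB2 ⊢
    linarith [SB1, SB2]
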